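/- arXiv:2011.09234 — 7 statements merged into one kernel-verified Lean document; each statement's English description precedes it below -/
import Mathlib

section
/- If R is the smallest positive root of 2R² + 3√3(e−1)R + 3(1−e) = 0, then for all r with 0 ≤ r < R we have √3·r/((√3 − r)(√3 − 2r)) < √3/(√3 − r) − 1/e. -/
theorem stmt3 (R : ℝ)
    (hR : IsLeast {R : ℝ | 0 < R ∧
        2 * R ^ 2 + 3 * Real.sqrt 3 * (Real.exp 1 - 1) * R + 3 * (1 - Real.exp 1) = 0} R) :
    ∀ r : ℝ, 0 ≤ r → r < R →
      Real.sqrt 3 * r / ((Real.sqrt 3 - r) * (Real.sqrt 3 - 2 * r)) <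
        Real.sqrt 3 / (Real.sqrt 3 - r) - 1 / Real.exp 1 := by
  obtain ⟨⟨hRpos, hfR⟩, -⟩ := hR
  intro r hr0 hrR
  set s := Real.sqrt 3 with hs
  have hs2 : s ^ 2 = 3 := Real.sq_sqrt (by norm_num)
  have hspos : 0 < s := Real.sqrt_pos.mpr (by norm_num)
  have he : 1 < Real.exp 1 := by
    have := Real.exp_one_gt_d9; linarith
  have he' : 0 < Real.exp 1 := Real.exp_pos 1
  -- 2R < s
  have hR3 : 2 * R < s := by
    by_contra h
    push_neg at h
    nlinarith [mul_nonneg (by linarith : (0:ℝ) ≤ 2*R - s) (by linarith : (0:ℝ) ≤ Real.exp 1 - 1),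
      mul_nonneg (by linarith : (0:ℝ) ≤ 2*R - s) hspos.le,
      mul_nonneg (by linarith : (0:ℝ) ≤ 2*R - s) hRpos.le,
      mul_nonneg (mul_nonneg (by linarith : (0:ℝ) ≤ 2*R - s) hspos.le) (by linarith : (0:ℝ) ≤ Real.exp 1 - 1)]
  have hsr : 0 < s - r := by linarith
  have hs2r : 0 < s - 2 * r := by linarith
  -- f(r) < 0 since f strictly increasing on nonnegatives and f(R)=0
  have hfr : 0 < -(2 * r ^ 2 + 3 * s * (Real.exp 1 - 1) * r + 3 * (1 - Real.exp 1)) := by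
    nlinarith [mul_pos (by linarith : (0:ℝ) < R - r) (by linarith : (0:ℝ) < R + r),
      mul_pos (mul_pos (by linarith : (0:ℝ) < R - r) hspos) (by linarith : (0:ℝ) < Real.exp 1 - 1)]
  have h1 : 0 < (s - r) * (s - 2 * r) := mul_pos hsr hs2r
  rw [div_sub_div _ _ (ne_of_gt hsr) (ne_of_gt he'), div_lt_div_iff₀ h1 (mul_pos hsr he')]
  nlinarith [mul_pos hsr hfr, mul_pos (mul_pos hsr hfr) he', hs2, he']
end

section
/- For every real c with 1/e < c ≤ (e + 1/e)/2, the open disc {w ∈ ℂ : |w − c| < c − 1/e} is contained in the set {w ∈ ℂ : w ≠ 0 and |Log w| < 1}, where Log denotes the principal branch of the logarithm. -/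
set_option maxHeartbeats 1000000

open Real

/-- Lower bound on `exp (-x)` for `x ∈ [0,1]`. -/
lemma aux_exp_neg_lb (x : ℝ) (h0 : 0 ≤ x) (h1 : x ≤ 1) :
    1 - x + x ^ 2 / 2 - x ^ 3 / 6 - 5 / 96 * x ^ 4 ≤ Real.exp (-x) := by
  have hx : |(-x : ℝ)| ≤ 1 := by rw [abs_neg, abs_of_nonneg h0]; exact h1
  have h := Real.exp_bound hx (n := 4) (by norm_num)
  have e : ∑ m ∈ Finset.range 4, (-x) ^ m / (m.factorial : ℝ)
      = 1 - x + x ^ 2 / 2 - x ^ 3 / 6 := by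
    norm_num [Finset.sum_range_succ, Nat.factorial]
    ring
  rw [e, abs_neg, abs_of_nonneg h0] at h
  norm_num [Nat.factorial] at h
  have h' := abs_le.1 h
  nlinarith [h'.1]

/-- `tanh x ≤ x` on `[0,1]`, in the form `sinh x ≤ x * cosh x`. -/
lemma aux_sinh_le (x : ℝ) (h0 : 0 ≤ x) (h1 : x ≤ 1) : Real.sinh x ≤ x * Real.cosh x := by
  have hq := aux_exp_neg_lb x h0 h1
  have hPpos : 0 < Real.exp (-x) := Real.exp_pos _
  have hprod : Real.exp x * Real.exp (-x) = 1 := by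
    rw [← Real.exp_add]; simp
  have hqpos : 0 ≤ 1 - x + x ^ 2 / 2 - x ^ 3 / 6 - 5 / 96 * x ^ 4 := by
    have h3 : x ^ 3 ≤ x ^ 2 := by nlinarith [sq_nonneg x]
    have h4 : x ^ 4 ≤ x ^ 2 := by nlinarith [sq_nonneg x, sq_nonneg (x*x)]
    nlinarith [sq_nonneg (3*x - 16/3)]
  have key : 1 - x ≤ Real.exp (-x) ^ 2 * (1 + x) := by
    have hsq : (1 - x + x ^ 2 / 2 - x ^ 3 / 6 - 5 / 96 * x ^ 4) ^ 2 ≤ Real.exp (-x) ^ 2 := by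
      nlinarith
    nlinarith [hsq, mul_nonneg (mul_nonneg h0 h0) h0, sq_nonneg (1-x), sq_nonneg x,
      mul_nonneg (mul_nonneg (mul_nonneg h0 h0) h0) h0, sq_nonneg (x*(1-x)), sq_nonneg (x*x*(1-x))]
  have h2 : Real.exp x * (1 - x) ≤ Real.exp (-x) * (1 + x) := by
    calc Real.exp x * (1 - x) ≤ Real.exp x * (Real.exp (-x) ^ 2 * (1 + x)) :=
          mul_le_mul_of_nonneg_left key (le_of_lt (Real.exp_pos x))
    _ = (Real.exp x * Real.exp (-x)) * (Real.exp (-x) * (1 + x)) := by ring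
    _ = Real.exp (-x) * (1 + x) := by rw [hprod]; ring
  rw [Real.sinh_eq, Real.cosh_eq]
  nlinarith [h2]

/-- The core inequality: `cosh 1 * cos (sqrt (1 - u^2)) ≤ cosh u` for `u ∈ [0,1]`. -/
lemma aux_core (u : ℝ) (h0 : 0 ≤ u) (h1 : u ≤ 1) :
    Real.cosh 1 * Real.cos (Real.sqrt (1 - u ^ 2)) ≤ Real.cosh u := by
  have ha0 : (0:ℝ) ≤ (1 + u) / 2 := by linarith
  have ha1 : (1 + u) / 2 ≤ 1 := by linarith
  have hb0 : (0:ℝ) ≤ (1 - u) / 2 := by linarith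
  have hb1 : (1 - u) / 2 ≤ 1 := by linarith
  have e1 : Real.cosh 1 = Real.cosh ((1 + u) / 2) * Real.cosh ((1 - u) / 2)
      + Real.sinh ((1 + u) / 2) * Real.sinh ((1 - u) / 2) := by
    rw [← Real.cosh_add]; congr 1; ring
  have e2 : Real.cosh u = Real.cosh ((1 + u) / 2) * Real.cosh ((1 - u) / 2)
      - Real.sinh ((1 + u) / 2) * Real.sinh ((1 - u) / 2) := by
    rw [← Real.cosh_sub]; congr 1; ring
  have hsa := aux_sinh_le _ ha0 ha1
  have hsb := aux_sinh_le _ hb0 hb1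
  have hsa0 : 0 ≤ Real.sinh ((1 + u) / 2) := Real.sinh_nonneg_iff.2 ha0
  have hsb0 : 0 ≤ Real.sinh ((1 - u) / 2) := Real.sinh_nonneg_iff.2 hb0
  have hca : 0 < Real.cosh ((1 + u) / 2) := Real.cosh_pos _
  have hcb : 0 < Real.cosh ((1 - u) / 2) := Real.cosh_pos _
  set q : ℝ := ((1 + u) / 2) * ((1 - u) / 2) with hqdef
  have hq0 : 0 ≤ q := mul_nonneg ha0 hb0
  have hq14 : q ≤ 1 / 4 := by rw [hqdef]; nlinarith
  have step1 : Real.cosh 1 - Real.cosh u ≤ q * (Real.cosh 1 + Real.cosh u) := by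
    rw [e1, e2, hqdef]
    linarith [mul_le_mul hsa hsb hsb0 (mul_nonneg ha0 hca.le)]
  -- the cosine bound
  have hu2 : 0 ≤ 1 - u ^ 2 := by nlinarith
  set y : ℝ := Real.sqrt (1 - u ^ 2) with hydef
  have hy2 : y ^ 2 = 1 - u ^ 2 := Real.sq_sqrt hu2
  have hy0 : 0 ≤ y := Real.sqrt_nonneg _
  have hy1 : y ≤ 1 := by
    rw [hydef]
    calc Real.sqrt (1 - u ^ 2) ≤ Real.sqrt 1 := Real.sqrt_le_sqrt (by nlinarith)
    _ = 1 := Real.sqrt_one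
  have hyq : y ^ 2 = 4 * q := by rw [hy2, hqdef]; ring
  have hcos := Real.cos_bound (x := y) (by rw [abs_of_nonneg hy0]; exact hy1)
  rw [abs_of_nonneg hy0] at hcos
  have hcos' : Real.cos y ≤ 1 - y ^ 2 / 2 + y ^ 4 * (5 / 96) := by
    have := (abs_le.1 hcos).2; linarith
  have hcosq : Real.cos y ≤ 1 - 2 * q + 5 / 6 * q ^ 2 := by
    have : y ^ 4 = 16 * q ^ 2 := by
      have : y ^ 4 = (y ^ 2) ^ 2 := by ring
      rw [this, hyq]; ring
    rw [this] at hcos'; rw [hyq] at hcos'; linarith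
  -- combine
  have hc1 : 0 < Real.cosh 1 := Real.cosh_pos _
  have halg : (1 - 2 * q + 5 / 6 * q ^ 2) * (1 + q) ≤ 1 - q := by
    nlinarith [mul_le_mul_of_nonneg_left hq14 (sq_nonneg q)]
  have h1q : 0 < 1 + q := by linarith
  have final : Real.cosh 1 * Real.cos y * (1 + q) ≤ Real.cosh u * (1 + q) := by
    have t1 : Real.cosh 1 * Real.cos y * (1 + q)
        ≤ Real.cosh 1 * ((1 - 2 * q + 5 / 6 * q ^ 2) * (1 + q)) := by
      have := mul_le_mul_of_nonneg_right (mul_le_mul_of_nonneg_left hcosq hc1.le) h1q.le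
      linarith [this]
    have t2 : Real.cosh 1 * ((1 - 2 * q + 5 / 6 * q ^ 2) * (1 + q))
        ≤ Real.cosh 1 * (1 - q) := mul_le_mul_of_nonneg_left halg hc1.le
    have t3 : Real.cosh 1 * (1 - q) ≤ Real.cosh u * (1 + q) := by linarith [step1]
    linarith
  exact le_of_mul_le_mul_right final h1q

/-- If `u ∈ (-1,1)`, `0 ≤ t ≤ π` and `1 ≤ u² + t²`, then `cosh 1 * cos t ≤ cosh u`. -/
lemma aux_core2 (u t : ℝ) (hu1 : -1 < u) (hu2 : u < 1) (ht0 : 0 ≤ t) (htpi : t ≤ π)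
    (hsum : 1 ≤ u ^ 2 + t ^ 2) : Real.cosh 1 * Real.cos t ≤ Real.cosh u := by
  have habs0 : 0 ≤ |u| := abs_nonneg u
  have habs1 : |u| ≤ 1 := by rw [abs_le]; constructor <;> linarith
  have hsq : |u| ^ 2 = u ^ 2 := sq_abs u
  have hy0 : 0 ≤ Real.sqrt (1 - |u| ^ 2) := Real.sqrt_nonneg _
  have hyt : Real.sqrt (1 - |u| ^ 2) ≤ t := by
    rw [show t = Real.sqrt (t ^ 2) by rw [Real.sqrt_sq ht0]]
    apply Real.sqrt_le_sqrt
    rw [hsq]; nlinarith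
  have hcoscos : Real.cos t ≤ Real.cos (Real.sqrt (1 - |u| ^ 2)) :=
    Real.cos_le_cos_of_nonneg_of_le_pi hy0 htpi hyt
  have hcore := aux_core |u| habs0 habs1
  rw [Real.cosh_abs] at hcore
  have hc1 : (0:ℝ) < Real.cosh 1 := Real.cosh_pos _
  calc Real.cosh 1 * Real.cos t ≤ Real.cosh 1 * Real.cos (Real.sqrt (1 - |u| ^ 2)) :=
        mul_le_mul_of_nonneg_left hcoscos hc1.le
    _ ≤ Real.cosh u := hcore

theorem stmt4 (c : ℝ) (hc1 : 1 / Real.exp 1 < c)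
    (hc2 : c ≤ (Real.exp 1 + 1 / Real.exp 1) / 2) :
    ∀ w : ℂ, ‖w - (c : ℂ)‖ < c - 1 / Real.exp 1 →
      w ≠ 0 ∧ ‖Complex.log w‖ < 1 := by
  intro w hw
  have hE0 : (0:ℝ) < Real.exp 1 := Real.exp_pos 1
  have hE1 : (1:ℝ) < Real.exp 1 := by
    have := Real.exp_one_gt_d9; linarith
  have hEinv : 0 < 1 / Real.exp 1 := by positivity
  have hcpos : 0 < c := lt_trans hEinv hc1
  -- lower bound on |w|
  have h01 : 1 / Real.exp 1 < ‖w‖ := by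
    have t1 : ‖(c : ℂ)‖ ≤ ‖(c : ℂ) - w‖ + ‖w‖ := by
      simpa using norm_add_le ((c : ℂ) - w) w
    rw [Complex.norm_real, Real.norm_eq_abs, abs_of_pos hcpos, norm_sub_rev] at t1
    linarith
  have hwabs_pos : 0 < ‖w‖ := lt_trans hEinv h01
  have hw0 : w ≠ 0 := by
    intro h
    rw [h] at hwabs_pos
    simp at hwabs_pos
  refine ⟨hw0, ?_⟩
  -- nesting into the largest disc
  set C : ℝ := (Real.exp 1 + 1 / Real.exp 1) / 2 with hCdef
  set ρ : ℝ := (Real.exp 1 - 1 / Real.exp 1) / 2 with hρdef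
  have hCpos : 0 < C := by rw [hCdef]; positivity
  have hC : ‖w - (C : ℂ)‖ < ρ := by
    have e : w - (C : ℂ) = (w - (c : ℂ)) + ((c : ℂ) - (C : ℂ)) := by ring
    have t1 : ‖w - (C : ℂ)‖
        ≤ ‖w - (c : ℂ)‖ + ‖(c : ℂ) - (C : ℂ)‖ := by
      rw [e]; exact norm_add_le _ _
    have t2 : ‖(c : ℂ) - (C : ℂ)‖ = C - c := by
      rw [← Complex.ofReal_sub, Complex.norm_real, Real.norm_eq_abs, abs_of_nonpos (by linarith)]
      ring
    rw [t2] at t1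
    have : C - 1 / Real.exp 1 = ρ := by rw [hCdef, hρdef]; ring
    linarith
  -- upper bound on |w|
  have hr2 : ‖w‖ < Real.exp 1 := by
    have t1 : ‖w‖ ≤ ‖w - (C : ℂ)‖ + ‖(C : ℂ)‖ := by
      simpa using norm_add_le (w - (C : ℂ)) ((C : ℂ))
    rw [Complex.norm_real, Real.norm_eq_abs, abs_of_pos hCpos] at t1
    have : ρ + C = Real.exp 1 := by rw [hCdef, hρdef]; ring
    linarith
  -- the key real inequality
  have hC2 : (‖w - (C : ℂ)‖) ^ 2 < ρ ^ 2 := by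
    have hρpos : 0 < ρ := lt_of_le_of_lt (norm_nonneg _) hC
    exact pow_lt_pow_left₀ hC (norm_nonneg _) (by norm_num)
  have hnsq : (‖w - (C : ℂ)‖) ^ 2 = (w.re - C) ^ 2 + w.im ^ 2 := by
    rw [Complex.sq_norm, Complex.normSq_apply]
    simp [Complex.sub_re, Complex.sub_im]
    ring
  have hwsq : (‖w‖) ^ 2 = w.re ^ 2 + w.im ^ 2 := by
    rw [Complex.sq_norm, Complex.normSq_apply]; ring
  have hEprod : Real.exp 1 * (1 / Real.exp 1) = 1 := by field_simp
  have hkey : (‖w‖) ^ 2 + 1 < (Real.exp 1 + 1 / Real.exp 1) * w.re := by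
    rw [hnsq] at hC2
    rw [hwsq]
    rw [hρdef] at hC2
    rw [hCdef] at hC2
    nlinarith [hC2, hEprod]
  -- logarithm coordinates
  set u : ℝ := Real.log (‖w‖) with hudef
  have hrexp : Real.exp u = ‖w‖ := Real.exp_log hwabs_pos
  have hu1 : u < 1 := by
    rw [hudef, Real.log_lt_iff_lt_exp hwabs_pos]; exact hr2
  have hu2 : -1 < u := by
    rw [hudef, Real.lt_log_iff_exp_lt hwabs_pos, Real.exp_neg, ← one_div]; exact h01
  have hexpneg : Real.exp (-u) = 1 / ‖w‖ := by
    rw [Real.exp_neg, hrexp, one_div]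
  have hcoshu : 2 * Real.cosh u * ‖w‖ = (‖w‖) ^ 2 + 1 := by
    rw [Real.cosh_eq, hexpneg, hrexp]
    field_simp
  have hcosh1 : 2 * Real.cosh 1 = Real.exp 1 + 1 / Real.exp 1 := by
    rw [Real.cosh_eq, Real.exp_neg, one_div]; ring
  have hre : ‖w‖ * Real.cos (Complex.arg w) = w.re := Complex.norm_mul_cos_arg w
  have hmain : Real.cosh u < Real.cosh 1 * Real.cos (Complex.arg w) := by
    have hsub : (Real.exp 1 + 1 / Real.exp 1) * w.re
        = 2 * (Real.cosh 1 * Real.cos (Complex.arg w)) * ‖w‖ := by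
      rw [← hre, ← hcosh1]; ring
    rw [hsub] at hkey
    rw [← hcoshu] at hkey
    nlinarith [hkey, hwabs_pos]
  -- conclude
  have hlog : ‖Complex.log w‖ = Real.sqrt (u ^ 2 + (Complex.arg w) ^ 2) := by
    rw [Complex.log, Complex.norm_add_mul_I, hudef]
  rw [hlog]
  rw [show (1:ℝ) = Real.sqrt 1 by rw [Real.sqrt_one]]
  apply Real.sqrt_lt_sqrt (by positivity)
  by_contra hcon
  push_neg at hcon
  have ht0 : 0 ≤ |Complex.arg w| := abs_nonneg _
  have htpi : |Complex.arg w| ≤ π := Complex.abs_arg_le_pi w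
  have hsum : 1 ≤ u ^ 2 + |Complex.arg w| ^ 2 := by rw [sq_abs]; exact hcon
  have := aux_core2 u |Complex.arg w| hu2 hu1 ht0 htpi hsum
  rw [Real.cos_abs] at this
  linarith
end

section
/- For every real c with 1/3 < c ≤ 5/3, the open disc {w = x + iy : |w − c| < c − 1/3} is contained in the region Ω_c bounded by the cardioid (9x² + 9y² − 18x + 5)² − 16(9x² + 9y² − 6x + 1) = 0, i.e., every point w = x+iy in the disc satisfies (9x² + 9y² − 18x + 5)² − 16(9x² + 9y² − 6x + 1) < 0. -/
theorem stmt5 (c : ℝ) (hc1 : 1 / 3 < c) (hc2 : c ≤ 5 / 3) :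
    ∀ w : ℂ, ‖w - (c : ℂ)‖ < c - 1 / 3 →
      (9 * w.re ^ 2 + 9 * w.im ^ 2 - 18 * w.re + 5) ^ 2 -
        16 * (9 * w.re ^ 2 + 9 * w.im ^ 2 - 6 * w.re + 1) < 0 := by
  intro w hw
  set x := w.re with hx
  set y := w.im with hy
  have habs : (x - c) ^ 2 + y ^ 2 < (c - 1 / 3) ^ 2 := by
    have h0 : (0:ℝ) ≤ ‖w - (c:ℂ)‖ := norm_nonneg _
    have h1 : ‖w - (c:ℂ)‖ ^ 2 < (c - 1 / 3) ^ 2 := by nlinarith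
    rw [Complex.sq_norm, Complex.normSq_apply] at h1
    simp only [Complex.sub_re, Complex.sub_im, Complex.ofReal_re, Complex.ofReal_im] at h1
    nlinarith [h1]
  set ρ := Real.sqrt ((x - 1/3) ^ 2 + y ^ 2) with hρ
  have hρ2 : ρ ^ 2 = (x - 1/3) ^ 2 + y ^ 2 := Real.sq_sqrt (by positivity)
  have hρ0 : 0 ≤ ρ := Real.sqrt_nonneg _
  have hu : x - 1/3 ≤ ρ := by nlinarith [sq_nonneg y, sq_nonneg (ρ - (x - 1/3)), sq_nonneg (ρ + (x - 1/3))]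
  have hdisc : ρ ^ 2 < 2 * (c - 1/3) * (x - 1/3) := by nlinarith [habs, hρ2]
  have hupos : 0 < x - 1/3 := by nlinarith [sq_nonneg ρ]
  have hρpos : 0 < ρ := lt_of_lt_of_le hupos hu
  have hA1 : 3 * ρ ^ 2 - 4 * (x - 1/3) < 4 * ρ := by nlinarith
  have hA2 : -(4 * ρ) < 3 * ρ ^ 2 - 4 * (x - 1/3) := by nlinarith
  nlinarith [mul_pos (by linarith : (0:ℝ) < 4 * ρ - (3 * ρ ^ 2 - 4 * (x - 1/3)))
    (by linarith : (0:ℝ) < 4 * ρ + (3 * ρ ^ 2 - 4 * (x - 1/3))), hρ2]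
end

section
/- For every real c with √2 − 1 < c ≤ √2 + 1, the open disc {w ∈ ℂ : |w − c| < 1 − |√2 − c|} is contained in the lune region {w ∈ ℂ : |w² − 1| < 2|w|}. -/
theorem stmt6 (c : ℝ) (hc1 : Real.sqrt 2 - 1 < c) (hc2 : c ≤ Real.sqrt 2 + 1) :
    ∀ w : ℂ, ‖w - (c : ℂ)‖ < 1 - |Real.sqrt 2 - c| →
      ‖w ^ 2 - 1‖ < 2 * ‖w‖ := by
  have hs2 : (1:ℝ) < Real.sqrt 2 := by
    nlinarith [Real.sq_sqrt (by norm_num : (0:ℝ) ≤ 2), Real.sqrt_nonneg 2]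
  intro w hw
  -- |w - 1| < √2
  have h1 : ‖w - 1‖ < Real.sqrt 2 := by
    have t : ‖w - 1‖ ≤ ‖w - (c:ℂ)‖ + ‖(c:ℂ) - 1‖ := by
      calc ‖w - 1‖ = ‖(w - (c:ℂ)) + ((c:ℂ) - 1)‖ := by ring_nf
        _ ≤ _ := norm_add_le _ _
    have hc : ‖(c:ℂ) - 1‖ = |c - 1| := by
      rw [show (c:ℂ) - 1 = ((c - 1 : ℝ) : ℂ) by push_cast; ring, Complex.norm_real, Real.norm_eq_abs]
    rw [hc] at t
    have : (1 - |Real.sqrt 2 - c|) + |c - 1| ≤ Real.sqrt 2 := by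
      rcases abs_cases (Real.sqrt 2 - c) with ⟨h, _⟩ | ⟨h, _⟩ <;>
        rcases abs_cases (c - 1) with ⟨h', _⟩ | ⟨h', _⟩ <;> linarith
    linarith
  -- √2 < |w + 1|
  have h2 : Real.sqrt 2 < ‖w + 1‖ := by
    have t : ‖(c:ℂ) + 1‖ ≤ ‖w + 1‖ + ‖w - (c:ℂ)‖ := by
      calc ‖(c:ℂ) + 1‖ = ‖(w + 1) + (-(w - (c:ℂ)))‖ := by ring_nf
        _ ≤ ‖w + 1‖ + ‖-(w - (c:ℂ))‖ := norm_add_le _ _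
        _ = _ := by rw [norm_neg]
    have hc : ‖(c:ℂ) + 1‖ = c + 1 := by
      rw [show (c:ℂ) + 1 = ((c + 1 : ℝ) : ℂ) by push_cast; ring, Complex.norm_real, Real.norm_eq_abs]
      exact abs_of_pos (by linarith)
    rw [hc] at t
    have : Real.sqrt 2 ≤ c + 1 - (1 - |Real.sqrt 2 - c|) := by
      rcases abs_cases (Real.sqrt 2 - c) with ⟨h, _⟩ | ⟨h, _⟩ <;> linarith
    linarith
  -- squared versions
  have h1s : Complex.normSq (w - 1) < 2 := by
    have := pow_lt_pow_left₀ h1 (norm_nonneg _) (by norm_num : 2 ≠ 0)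
    rwa [Complex.sq_norm, Real.sq_sqrt (by norm_num : (0:ℝ) ≤ 2)] at this
  have h2s : 2 < Complex.normSq (w + 1) := by
    have := pow_lt_pow_left₀ h2 (Real.sqrt_nonneg 2) (by norm_num : 2 ≠ 0)
    rwa [Complex.sq_norm, Real.sq_sqrt (by norm_num : (0:ℝ) ≤ 2)] at this
  -- conclude
  refine lt_of_pow_lt_pow_left₀ 2 (by positivity) ?_
  rw [Complex.sq_norm, mul_pow, Complex.sq_norm]
  simp only [Complex.normSq_apply, Complex.sub_re, Complex.sub_im, Complex.add_re,
    Complex.add_im, Complex.one_re, Complex.one_im, pow_two, Complex.mul_re,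
    Complex.mul_im] at *
  nlinarith [sq_nonneg (w.re * w.im), sq_nonneg w.im, sq_nonneg w.re,
    sq_nonneg (w.re*w.re + w.im*w.im - 1)]
end

section
/- If R is the smallest positive root of (2 − 2√2)R² + √3(3√2 − 6)R + 3(2 − √2) = 0, then for all r with 0 ≤ r < R, √3·r/((√3 − r)(√3 − 2r)) < 1 − |√2 − √3/(√3 − r)|. -/
set_option maxHeartbeats 1000000 in
theorem stmt10 (R : ℝ)
    (hR : IsLeast {R : ℝ | 0 < R ∧
        (2 - 2 * Real.sqrt 2) * R ^ 2 + Real.sqrt 3 * (3 * Real.sqrt 2 - 6) * R +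
          3 * (2 - Real.sqrt 2) = 0} R) :
    ∀ r : ℝ, 0 ≤ r → r < R →
      Real.sqrt 3 * r / ((Real.sqrt 3 - r) * (Real.sqrt 3 - 2 * r)) <
        1 - |Real.sqrt 2 - Real.sqrt 3 / (Real.sqrt 3 - r)| := by
  intro r hr0 hrR
  set a : ℝ := Real.sqrt 3 with ha_def
  set b : ℝ := Real.sqrt 2 with hb_def
  have ha2 : a ^ 2 = 3 := Real.sq_sqrt (by norm_num)
  have hb2 : b ^ 2 = 2 := Real.sq_sqrt (by norm_num)
  have ha0 : (0:ℝ) ≤ a := Real.sqrt_nonneg 3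
  have hb0 : (0:ℝ) ≤ b := Real.sqrt_nonneg 2
  have ha1 : 1 < a := by nlinarith
  have hb1 : 1 < b := by nlinarith
  have hb2' : b < 2 := by nlinarith
  have ha2' : a < 2 := by nlinarith
  obtain ⟨⟨hRpos, heq⟩, -⟩ := hR
  -- rewrite the quadratic
  have heq2 : 2 * (1 - b) * R ^ 2 - 3 * a * (2 - b) * R + 3 * (2 - b) = 0 := by
    linear_combination heq
  -- f(r0) = 0 where r0 = a - a*b/2
  have hfr0 : 2 * (1 - b) * (a - a * b / 2) ^ 2 - 3 * a * (2 - b) * (a - a * b / 2)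
      + 3 * (2 - b) = 0 := by
    linear_combination (-4 + 2 * b + b ^ 2 - b ^ 3 / 2) * ha2 + (3 - 3 / 2 * b) * hb2
  have hr0pos : 0 < a - a * b / 2 := by nlinarith
  -- R ≤ r0
  have hle : R ≤ a - a * b / 2 := by
    by_contra h
    push_neg at h
    have hbr : 0 < 3 * a * (2 - b) + 2 * (b - 1) * (R + (a - a * b / 2)) := by
      nlinarith
    nlinarith [mul_pos (sub_pos.mpr h) hbr]
  have hrlt : r < a - a * b / 2 := lt_of_lt_of_le hrR hle
  have har : 0 < a - r := by nlinarith
  have ha2r : 0 < a - 2 * r := by nlinarith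
  have hD : 0 < (a - r) * (a - 2 * r) := mul_pos har ha2r
  -- the abs is b - a/(a-r) ≥ 0
  have habs : 0 ≤ b - a / (a - r) := by
    rw [sub_nonneg, div_le_iff₀ har]
    nlinarith
  rw [abs_of_nonneg habs]
  -- f(r) > 0
  have hbr2 : 0 < 3 * a * (2 - b) + 2 * (b - 1) * (r + R) := by nlinarith
  have hfr : 0 < 2 * (1 - b) * r ^ 2 - 3 * a * (2 - b) * r + 3 * (2 - b) := by
    linarith [mul_pos (sub_pos.mpr hrR) hbr2]
  have key : (1 - b) * ((a - r) * (a - 2 * r)) + a * (a - 2 * r) - a * r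
      = 2 * (1 - b) * r ^ 2 - 3 * a * (2 - b) * r + 3 * (2 - b) := by
    linear_combination (2 - b) * ha2
  have ht2 : a / (a - r) * ((a - r) * (a - 2 * r)) = a * (a - 2 * r) := by
    field_simp
  rw [div_lt_iff₀ hD]
  linarith [hfr, key, ht2]
end

section
/- For every real c with 2(√2 − 1) < c ≤ √2, the open disc {w ∈ ℂ : |w − c| < c − 2(√2 − 1)} is contained in ψ(𝔻), where ψ(z) = 1 + (z² + kz)/(k² − kz) with k = √2 + 1 and 𝔻 the open unit disc. -/
open Complex

/-- Key lemma: for `w` in the open disc of center `√2` and radius `2 - √2`,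
there is `t` with `|t| < √2 - 1` and `1 + t² = w (1 - t)`. -/
lemma aux11 (w : ℂ) (hw : ‖w - (Real.sqrt 2 : ℂ)‖ < 2 - Real.sqrt 2) :
    ∃ t : ℂ, ‖t‖ < Real.sqrt 2 - 1 ∧ 1 + t ^ 2 = w * (1 - t) := by
  set r2 := Real.sqrt 2 with hr2def
  have hr2 : r2 ^ 2 = 2 := Real.sq_sqrt (by norm_num)
  have hr2nn : 0 ≤ r2 := Real.sqrt_nonneg 2
  have hr2gt : 1 < r2 := by nlinarith
  have hr2lt : r2 < 3/2 := by nlinarith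
  obtain ⟨s, hs⟩ := IsAlgClosed.exists_pow_nat_eq (w ^ 2 + 4 * w - 4) (n := 2) (by norm_num)
  set x := w.re with hx
  set y := w.im with hy
  -- disc hypothesis in coordinates
  have hdisc : (x - r2) ^ 2 + y ^ 2 < (2 - r2) ^ 2 := by
    have h1 : (‖w - (r2 : ℂ)‖) ^ 2 < (2 - r2) ^ 2 :=
      pow_lt_pow_left₀ hw (norm_nonneg _) (by norm_num)
    have h2 : (‖w - (r2 : ℂ)‖) ^ 2 = (x - r2) ^ 2 + y ^ 2 := by
      rw [Complex.sq_norm, Complex.normSq_apply]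
      simp [hx, hy]
      ring
    linarith [h2 ▸ h1]
  -- abbreviations
  set A := Complex.normSq (s - w) with hA
  set B := Complex.normSq (s + w) with hB
  set Q := ‖w ^ 2 + 4 * w - 4‖ with hQdef
  have hQnn : 0 ≤ Q := norm_nonneg _
  have hsA : Complex.normSq s = Q := by
    rw [hQdef, ← hs, ← Complex.sq_norm, norm_pow]
  -- parallelogram law
  have hsum : A + B = 2 * (Q + Complex.normSq w) := by
    rw [hA, hB, ← hsA]
    simp [Complex.normSq_apply, Complex.sub_re, Complex.sub_im, Complex.add_re,
      Complex.add_im]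
    ring
  -- product
  have hprod : A * B = 16 * Complex.normSq (w - 1) := by
    have h1 : (s - w) * (s + w) = 4 * (w - 1) := by linear_combination hs
    have h2 : Complex.normSq ((s - w) * (s + w)) = Complex.normSq (4 * (w - 1)) := by
      rw [h1]
    rw [map_mul, map_mul] at h2
    have h3 : Complex.normSq (4 : ℂ) = 16 := by
      simp [Complex.normSq_apply]
      norm_num
    rw [h3] at h2
    exact h2
  -- lower bound on Q
  have hQ : Complex.normSq (w + 2) - 8 ≤ Q := by
    have h1 : w ^ 2 + 4 * w - 4 = (w + 2) ^ 2 - 8 := by ring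
    have h2 : ‖(w + 2) ^ 2‖ - ‖(8 : ℂ)‖ ≤
        ‖(w + 2) ^ 2 - 8‖ := by
      exact norm_sub_norm_le _ _
    have h3 : ‖(w + 2) ^ 2‖ = Complex.normSq (w + 2) := by
      rw [norm_pow, Complex.sq_norm]
    have h4 : ‖(8 : ℂ)‖ = 8 := by
      norm_num
    rw [hQdef, h1]
    calc Complex.normSq (w + 2) - 8 = ‖(w + 2) ^ 2‖ - ‖(8 : ℂ)‖ := by
          rw [h3, h4]
      _ ≤ ‖(w + 2) ^ 2 - 8‖ := h2
  -- coordinates of the normSq's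
  have hnw : Complex.normSq w = x ^ 2 + y ^ 2 := by
    rw [Complex.normSq_apply]; ring
  have hnw1 : Complex.normSq (w - 1) = (x - 1) ^ 2 + y ^ 2 := by
    rw [Complex.normSq_apply]; simp [hx, hy]; ring
  have hnw2 : Complex.normSq (w + 2) = (x + 2) ^ 2 + y ^ 2 := by
    rw [Complex.normSq_apply]; simp [hx, hy]; ring
  -- the key algebraic identity / inequality
  have hrho : (0:ℝ) < 12 - 8 * r2 := by nlinarith
  have hkey : ((12 - 8 * r2) - A) * ((12 - 8 * r2) - B) < 0 := by
    have hident : (12 - 8*r2)^2 - 2*(12 - 8*r2)*(((x+2)^2 + y^2 - 8) + (x^2 + y^2))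
        + 16*((x-1)^2 + y^2)
        = -(32*(r2-1)*((2-r2)^2 - ((x-r2)^2 + y^2))) + 64*(x-1)*(r2^2 - 2) := by
      ring
    have hgap : 0 < (2-r2)^2 - ((x-r2)^2 + y^2) := by linarith
    have hposmul : 0 < 32*(r2-1)*((2-r2)^2 - ((x-r2)^2 + y^2)) := by
      apply mul_pos (by linarith) hgap
    have h5 : (12 - 8*r2)^2 - 2*(12 - 8*r2)*(((x+2)^2 + y^2 - 8) + (x^2 + y^2))
        + 16*((x-1)^2 + y^2) < 0 := by
      rw [hident, hr2]
      ring_nf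
      linarith [hposmul]
    have h6 : ((12 - 8 * r2) - A) * ((12 - 8 * r2) - B)
        = (12 - 8*r2)^2 - (12 - 8*r2)*(A + B) + A * B := by ring
    rw [h6, hsum, hprod, hnw1]
    have h7 : (12 - 8*r2) * (2 * (Q + Complex.normSq w))
        ≥ (12 - 8*r2) * (2 * ((((x+2)^2 + y^2 - 8)) + (x^2+y^2))) := by
      apply mul_le_mul_of_nonneg_left _ (le_of_lt hrho)
      rw [hnw]
      linarith [hQ, hnw2]
    linarith [h5, h7]
  -- choose the root with small modulus
  have habs2 : (r2 - 1) ^ 2 = 3 - 2 * r2 := by nlinarith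
  rcases lt_or_ge A (12 - 8 * r2) with hAlt | hAge
  · refine ⟨(s - w) / 2, ?_, by linear_combination (1/4 : ℂ) * hs⟩
    have h1 : (‖(s - w) / 2‖) ^ 2 = A / 4 := by
      rw [Complex.sq_norm, hA]
      rw [map_div₀]
      norm_num [Complex.normSq_apply]
    have h2 : (‖(s - w) / 2‖) ^ 2 < (r2 - 1) ^ 2 := by
      rw [h1, habs2]; linarith
    exact lt_of_pow_lt_pow_left₀ 2 (by linarith) h2
  · have hBlt : B < 12 - 8 * r2 := by
      by_contra hB'
      push_neg at hB'
      have h0 : (0:ℝ) ≤ (A - (12 - 8 * r2)) * (B - (12 - 8 * r2)) :=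
        mul_nonneg (by linarith) (by linarith)
      have h0' : ((12 - 8 * r2) - A) * ((12 - 8 * r2) - B)
          = (A - (12 - 8 * r2)) * (B - (12 - 8 * r2)) := by ring
      rw [h0'] at hkey
      linarith
    refine ⟨-(s + w) / 2, ?_, by linear_combination (1/4 : ℂ) * hs⟩
    have h1 : (‖-(s + w) / 2‖) ^ 2 = B / 4 := by
      rw [Complex.sq_norm, hB]
      rw [map_div₀, Complex.normSq_neg]
      norm_num [Complex.normSq_apply]
    have h2 : (‖-(s + w) / 2‖) ^ 2 < (r2 - 1) ^ 2 := by
      rw [h1, habs2]; linarith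
    exact lt_of_pow_lt_pow_left₀ 2 (by linarith) h2

theorem stmt11 (c : ℝ) (hc1 : 2 * (Real.sqrt 2 - 1) < c) (hc2 : c ≤ Real.sqrt 2) :
    ∀ w : ℂ, ‖w - (c : ℂ)‖ < c - 2 * (Real.sqrt 2 - 1) →
      ∃ z : ℂ, ‖z‖ < 1 ∧
        1 + (z ^ 2 + ((Real.sqrt 2 : ℂ) + 1) * z) /
          (((Real.sqrt 2 : ℂ) + 1) ^ 2 - ((Real.sqrt 2 : ℂ) + 1) * z) = w := by
  intro w hw
  set r2 := Real.sqrt 2 with hr2def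
  have hr2 : r2 ^ 2 = 2 := Real.sq_sqrt (by norm_num)
  have hr2nn : 0 ≤ r2 := Real.sqrt_nonneg 2
  have hr2gt : 1 < r2 := by nlinarith
  -- reduce to the disc centered at √2
  have hws : ‖w - (r2 : ℂ)‖ < 2 - r2 := by
    have h1 : w - (r2 : ℂ) = (w - (c : ℂ)) + ((c : ℂ) - (r2 : ℂ)) := by ring
    have h2 : ‖(c : ℂ) - (r2 : ℂ)‖ = r2 - c := by
      rw [show ((c : ℂ) - (r2 : ℂ)) = ((c - r2 : ℝ) : ℂ) by push_cast; ring,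
        Complex.norm_real, Real.norm_eq_abs, abs_of_nonpos (by linarith)]
      ring
    calc ‖w - (r2 : ℂ)‖ ≤ ‖w - (c : ℂ)‖ +
          ‖(c : ℂ) - (r2 : ℂ)‖ := by rw [h1]; exact norm_add_le _ _
      _ < (c - 2 * (r2 - 1)) + (r2 - c) := by rw [h2]; linarith [hw]
      _ = 2 - r2 := by ring
  obtain ⟨t, ht1, ht2⟩ := aux11 w hws
  set k : ℂ := (r2 : ℂ) + 1 with hk
  refine ⟨k * t, ?_, ?_⟩
  · have h1 : ‖k‖ = r2 + 1 := by
      rw [hk, show ((r2 : ℂ) + 1) = ((r2 + 1 : ℝ) : ℂ) by push_cast; ring,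
        Complex.norm_real, Real.norm_eq_abs, _root_.abs_of_nonneg (by linarith)]
    rw [norm_mul, h1]
    nlinarith [norm_nonneg t, ht1]
  · have hk0 : k ≠ 0 := by
      intro h
      have h2 : ((r2 : ℝ) : ℂ) = -1 := by rw [hk] at h; linear_combination h
      have h3 := congrArg Complex.re h2
      simp at h3
      linarith
    have ht0 : (1 : ℂ) - t ≠ 0 := by
      intro h
      have h1 : t = 1 := by linear_combination -h
      rw [h1] at ht1
      simp at ht1
      linarith
    have hden : k ^ 2 - k * (k * t) ≠ 0 := by
      have : k ^ 2 - k * (k * t) = k ^ 2 * (1 - t) := by ring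
      rw [this]
      exact mul_ne_zero (pow_ne_zero 2 hk0) ht0
    field_simp
    linear_combination ht2
end

section
/- The function f(z) = 3z(3 − 2√3 z)/(3 − √3 z)² satisfies f(0) = 0, f'(0) = 1, and sup over z in the unit disc of (1 − |z|²)|f'(z)| ≤ 1; that is, f is a normalized Bloch function. -/
theorem stmt15 (f : ℂ → ℂ)
    (hf : ∀ z : ℂ, f z = 3 * z * (3 - 2 * (Real.sqrt 3 : ℂ) * z) /
      (3 - (Real.sqrt 3 : ℂ) * z) ^ 2) :
    f 0 = 0 ∧ deriv f 0 = 1 ∧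
      ∀ z : ℂ, ‖z‖ < 1 →
        (1 - ‖z‖ ^ 2) * ‖deriv f z‖ ≤ 1 := by
  set C : ℂ := (Real.sqrt 3 : ℂ) with hC
  have hfe : f = fun z : ℂ => 3 * z * (3 - 2 * C * z) / (3 - C * z) ^ 2 := funext hf
  have hs3 : (Real.sqrt 3) ^ 2 = 3 := Real.sq_sqrt (by norm_num)
  have hcabs : ‖C‖ = Real.sqrt 3 := by
    rw [hC, Complex.norm_real, Real.norm_of_nonneg (Real.sqrt_nonneg 3)]
  have hnegen : ∀ z : ℂ, ‖z‖ < 1 → (3 : ℂ) - C * z ≠ 0 := by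
    intro z hz h
    have h3 : ‖C * z‖ = 3 := by
      have : C * z = 3 := by linear_combination -h
      rw [this]; simp
    rw [norm_mul, hcabs] at h3
    nlinarith [Real.sqrt_nonneg 3, norm_nonneg z]
  -- general derivative formula
  have hderiv : ∀ z : ℂ, ‖z‖ < 1 →
      deriv f z = 27 * (1 - C * z) / (3 - C * z) ^ 3 := by
    intro z hz
    have hne := hnegen z hz
    have h1 : HasDerivAt (fun w : ℂ => 3 * w * (3 - 2 * C * w))
        (3 * (3 - 2 * C * z) + 3 * z * (-(2 * C))) z := by
      have ha : HasDerivAt (fun w : ℂ => 3 * w) 3 z := by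
        simpa using (hasDerivAt_id z).const_mul (3 : ℂ)
      have hb : HasDerivAt (fun w : ℂ => 3 - 2 * C * w) (-(2 * C)) z := by
        have := ((hasDerivAt_id z).const_mul (2 * C)).const_sub (3 : ℂ)
        simpa using this
      simpa using ha.fun_mul hb
    have h2 : HasDerivAt (fun w : ℂ => (3 - C * w) ^ 2)
        (2 * (3 - C * z) ^ 1 * (-C)) z := by
      have hb : HasDerivAt (fun w : ℂ => 3 - C * w) (-C) z := by
        have := ((hasDerivAt_id z).const_mul C).const_sub (3 : ℂ)
        simpa using this
      simpa using hb.fun_pow 2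
    have hd := h1.fun_div h2 (pow_ne_zero 2 hne)
    rw [hfe, hd.deriv]
    field_simp
    ring
  have h0 : f 0 = 0 := by rw [hf]; simp
  refine ⟨h0, ?_, ?_⟩
  · rw [hderiv 0 (by simp)]
    norm_num
  · intro z hz
    rw [hderiv z hz]
    have hne := hnegen z hz
    set A : ℝ := ‖1 - C * z‖ with hA
    set B : ℝ := ‖3 - C * z‖ with hB
    have hBpos : 0 < B := norm_pos_iff.mpr hne
    have hAnn : 0 ≤ A := norm_nonneg _
    rw [norm_div, norm_mul, norm_pow, ← hA, ← hB]
    have h27 : ‖(27 : ℂ)‖ = 27 := by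
      rw [show (27 : ℂ) = ((27 : ℝ) : ℂ) by norm_num, Complex.norm_real]; norm_num
    rw [h27]
    -- coordinates
    have hr2 : ‖z‖ ^ 2 = z.re ^ 2 + z.im ^ 2 := by
      rw [Complex.sq_norm, Complex.normSq_apply]; ring
    have hA2 : A ^ 2 = 1 - 2 * Real.sqrt 3 * z.re + 3 * (z.re ^ 2 + z.im ^ 2) := by
      rw [hA, Complex.sq_norm, Complex.normSq_apply]
      simp [hC, Complex.sub_re, Complex.sub_im, Complex.mul_re, Complex.mul_im]
      linear_combination (z.re ^ 2 + z.im ^ 2) * hs3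
    have hB2 : B ^ 2 = 9 - 6 * Real.sqrt 3 * z.re + 3 * (z.re ^ 2 + z.im ^ 2) := by
      rw [hB, Complex.sq_norm, Complex.normSq_apply]
      simp [hC, Complex.sub_re, Complex.sub_im, Complex.mul_re, Complex.mul_im]
      linear_combination (z.re ^ 2 + z.im ^ 2) * hs3
    set P : ℝ := 1 - ‖z‖ ^ 2 with hP
    set S : ℝ := A ^ 2 with hS
    have hPpos : 0 < P := by
      rw [hP]
      have : ‖z‖ ^ 2 < 1 := by nlinarith [norm_nonneg z]
      linarith
    have hSnn : 0 ≤ S := sq_nonneg A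
    have hB2S : B ^ 2 = 3 * (S + 2 * P) := by
      rw [hB2, hA2, hP, hr2]; ring
    -- key inequality via AM-GM
    have hsq : (27 * P * A) ^ 2 ≤ (B ^ 3) ^ 2 := by
      have hfac : 0 ≤ (S - P) ^ 2 * (S + 8 * P) := by positivity
      calc (27 * P * A) ^ 2 = 729 * P ^ 2 * S := by rw [hS]; ring
        _ ≤ 27 * (S + 2 * P) ^ 3 := by nlinarith [hfac]
        _ = (B ^ 2) ^ 3 := by rw [hB2S]; ring
        _ = (B ^ 3) ^ 2 := by ring
    have key : 27 * P * A ≤ B ^ 3 := by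
      nlinarith [hsq, hAnn, hPpos, pow_pos hBpos 3]
    calc P * (27 * A / B ^ 3) = (27 * P * A) / B ^ 3 := by ring
      _ ≤ 1 := by rw [div_le_one (by positivity)]; linarith [key]
end
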